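/- Let Y ⊆ ℕ^ℕ be such that for each n ∈ ℕ the set {h(n) : h ∈ Y} is infinite. Then the following are equivalent: (1) maxfin(Y) is not a dominating family; (2) there is a non-principal filter F on ℕ such that the set {[f]_F : f ∈ Y} is bounded in the reduced product ℕ^ℕ/F, i.e., there exists g ∈ ℕ^ℕ such that for every f ∈ Y the set {n : f(n) < g(n)} belongs to F. -/

import Mathlib

open Filter

/-- `f ≤* g`: `f n ≤ g n` for all but finitely many `n`. -/
def EvLE (f g : ℕ → ℕ) : Prop := ∀ᶠ n in atTop, f n ≤ g n

/-- A subset of the Baire space is dominating if every function is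
eventually dominated by a member of it. -/
def Dominating (Y : Set (ℕ → ℕ)) : Prop := ∀ g : ℕ → ℕ, ∃ f ∈ Y, EvLE g f

/-- A subset of the Baire space is bounded (w.r.t. `≤*`) if some single
function eventually dominates all its members. -/
def BoundedStar (Y : Set (ℕ → ℕ)) : Prop := ∃ g : ℕ → ℕ, ∀ f ∈ Y, EvLE f g

/-- `maxfin Y`: pointwise maxima of nonempty finite subsets of `Y`. -/
def maxfin (Y : Set (ℕ → ℕ)) : Set (ℕ → ℕ) :=
  {g | ∃ F : Finset (ℕ → ℕ), F.Nonempty ∧ ↑F ⊆ Y ∧ g = fun n => F.sup (fun f => f n)}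

/-- `Y` is `k`-dominating: for each `f` there are `g_1, …, g_k ∈ Y` whose
pointwise maximum eventually dominates `f`. -/
def KDominating (Y : Set (ℕ → ℕ)) (k : ℕ) : Prop :=
  ∀ f : ℕ → ℕ, ∃ g : Fin k → (ℕ → ℕ), (∀ i, g i ∈ Y) ∧
    ∀ᶠ n in atTop, f n ≤ Finset.univ.sup (fun i => g i n)

/-- An open cover of a topological space. -/
def IsOpenCover {α : Type*} [TopologicalSpace α] (𝒰 : Set (Set α)) : Prop :=
  (∀ u ∈ 𝒰, IsOpen u) ∧ ⋃₀ 𝒰 = Set.univ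

/-- An ω-cover: a cover such that every finite subset of the space is
contained in some member. -/
def IsOmegaCover {α : Type*} (𝒱 : Set (Set α)) : Prop :=
  ⋃₀ 𝒱 = Set.univ ∧ ∀ F : Set α, F.Finite → ∃ V ∈ 𝒱, F ⊆ V

/-- A γ-cover: an infinite cover such that every point belongs to all but
finitely many members. -/
def IsGammaCover {α : Type*} (𝒱 : Set (Set α)) : Prop :=
  ⋃₀ 𝒱 = Set.univ ∧ 𝒱.Infinite ∧ ∀ x : α, {V ∈ 𝒱 | x ∉ V}.Finite

/-- A set of reals is zero-dimensional: its subspace topology has a base of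
clopen sets. -/
def ZeroDimensionalSet (X : Set ℝ) : Prop :=
  ∃ B : Set (Set ↥X), TopologicalSpace.IsTopologicalBasis B ∧ ∀ b ∈ B, IsClopen b

/-- The Menger property `Ufin(O,O)`. -/
def MengerProp (α : Type*) [TopologicalSpace α] : Prop :=
  ∀ 𝒰 : ℕ → Set (Set α), (∀ n, (𝒰 n).Countable ∧ IsOpenCover (𝒰 n)) →
    ∃ ℱ : ℕ → Set (Set α), (∀ n, (ℱ n).Finite ∧ ℱ n ⊆ 𝒰 n) ∧
      (⋃ n, ⋃₀ ℱ n) = Set.univ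

/-- The Hurewicz property `Ufin(O,Γ)`. -/
def HurewiczProp (α : Type*) [TopologicalSpace α] : Prop :=
  ∀ 𝒰 : ℕ → Set (Set α), (∀ n, (𝒰 n).Countable ∧ IsOpenCover (𝒰 n)) →
    ∃ ℱ : ℕ → Set (Set α), (∀ n, (ℱ n).Finite ∧ ℱ n ⊆ 𝒰 n) ∧
      ((∃ n, ⋃₀ ℱ n = Set.univ) ∨ IsGammaCover {s | ∃ n, s = ⋃₀ ℱ n})

/-- The property `Ufin(O,Ω)`. -/
def UfinOOmega (α : Type*) [TopologicalSpace α] : Prop :=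
  ∀ 𝒰 : ℕ → Set (Set α), (∀ n, (𝒰 n).Countable ∧ IsOpenCover (𝒰 n)) →
    ∃ ℱ : ℕ → Set (Set α), (∀ n, (ℱ n).Finite ∧ ℱ n ⊆ 𝒰 n) ∧
      ((∃ n, ⋃₀ ℱ n = Set.univ) ∨ IsOmegaCover {s | ∃ n, s = ⋃₀ ℱ n})

/-- Every member of a proper non-principal filter on `ℕ` is infinite. -/
lemma infinite_of_mem_nonprincipal {F : Filter ℕ} (_hne : (∅ : Set ℕ) ∉ F)
    (hnp : ¬ ∃ S : Set ℕ, F = Filter.principal S) {A : Set ℕ} (hA : A ∈ F) :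
    A.Infinite := by
  by_contra h
  rw [Set.not_infinite] at h
  apply hnp
  have hfin : ({T | T ⊆ A ∧ T ∈ F} : Set (Set ℕ)).Finite :=
    h.finite_subsets.subset fun T hT => hT.1
  have hS : ⋂₀ {T | T ⊆ A ∧ T ∈ F} ∈ F :=
    (Filter.sInter_mem hfin).2 fun T hT => hT.2
  refine ⟨⋂₀ {T | T ⊆ A ∧ T ∈ F}, Filter.ext fun B => ⟨fun hB => ?_, fun hB => ?_⟩⟩
  · rw [Filter.mem_principal]
    exact fun x hx =>
      (Set.mem_sInter.mp hx (B ∩ A) ⟨Set.inter_subset_right, Filter.inter_mem hB hA⟩).1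
  · exact Filter.mem_of_superset hS (Filter.mem_principal.mp hB)

/-- For `Y ⊆ ℕ^ℕ` with all vertical sections `{h(n) : h ∈ Y}` infinite:
`maxfin Y` is not dominating iff there is a non-principal (proper) filter
`F` on `ℕ` such that `{[f]_F : f ∈ Y}` is bounded in `ℕ^ℕ/F`. -/
theorem maxfin_not_dominating_iff_bounded_in_reduced_product
    (Y : Set (ℕ → ℕ)) (hY : ∀ n : ℕ, {k : ℕ | ∃ h ∈ Y, h n = k}.Infinite) :
    ¬ Dominating (maxfin Y) ↔
      ∃ F : Filter ℕ, (∅ : Set ℕ) ∉ F ∧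
        (¬ ∃ S : Set ℕ, F = Filter.principal S) ∧
        ∃ g : ℕ → ℕ, ∀ f ∈ Y, {n : ℕ | f n < g n} ∈ F := by
  classical
  constructor
  · intro hnd
    rw [Dominating] at hnd
    push_neg at hnd
    obtain ⟨g, hg⟩ := hnd
    -- the generating sets
    set A : Finset (ℕ → ℕ) → Set ℕ := fun s => {n | ∀ f ∈ s, f n < g n} with hA
    have hAinf : ∀ s : Finset (ℕ → ℕ), ↑s ⊆ Y → (A s).Infinite := by
      intro s hs
      rcases s.eq_empty_or_nonempty with rfl | hsne
      · simpa [hA] using Set.infinite_univ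
      · have hmem : (fun n => s.sup (fun f => f n)) ∈ maxfin Y :=
          ⟨s, hsne, hs, rfl⟩
        have hfe := hg _ hmem
        rw [EvLE, Filter.not_eventually] at hfe
        have hinf : {n | ¬ g n ≤ s.sup (fun f => f n)}.Infinite :=
          Nat.frequently_atTop_iff_infinite.mp hfe
        refine hinf.mono fun n hn => ?_
        intro f hf
        exact lt_of_le_of_lt (Finset.le_sup (f := fun f => f n) hf) (not_le.mp hn)
    refine ⟨⟨{B | ∃ s : Finset (ℕ → ℕ), ↑s ⊆ Y ∧ (A s \ B).Finite}, ?_, ?_, ?_⟩, ?_, ?_, g, ?_⟩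
    · exact ⟨∅, by simp⟩
    · rintro B C ⟨s, hs, hfin⟩ hBC
      exact ⟨s, hs, hfin.subset fun n hn => ⟨hn.1, fun h => hn.2 (hBC h)⟩⟩
    · rintro B C ⟨s, hs, hfinB⟩ ⟨t, ht, hfinC⟩
      refine ⟨s ∪ t, by simp [Finset.coe_union, Set.union_subset_iff, hs, ht], ?_⟩
      refine (hfinB.union hfinC).subset fun n hn => ?_
      have hns : n ∈ A s := fun f hf => hn.1 f (Finset.mem_union_left _ hf)
      have hnt : n ∈ A t := fun f hf => hn.1 f (Finset.mem_union_right _ hf)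
      rcases not_and_or.mp hn.2 with hB | hC
      · exact Or.inl ⟨hns, hB⟩
      · exact Or.inr ⟨hnt, hC⟩
    · rintro ⟨s, hs, hfin⟩
      exact hAinf s hs (by simpa using hfin)
    · rintro ⟨S, hFS⟩
      have hcof : ∀ m : ℕ, ({m}ᶜ : Set ℕ) ∈ Filter.principal S := by
        intro m
        rw [← hFS]
        exact ⟨∅, by simp, (Set.finite_singleton m).subset fun n hn => by
          simpa using hn.2⟩
      have hSempty : S = ∅ := by
        ext m
        simp only [Set.mem_empty_iff_false, iff_false]
        intro hm
        exact (Filter.mem_principal.mp (hcof m)) hm rfl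
      have : (∅ : Set ℕ) ∈ Filter.principal S := by rw [hSempty]; exact Filter.mem_principal_self _
      rw [← hFS] at this
      obtain ⟨s, hs, hfin⟩ := this
      exact hAinf s hs (by simpa using hfin)
    · intro f hf
      exact ⟨{f}, by simpa using hf, by simp [hA]⟩
  · rintro ⟨F, hne, hnp, g, hg⟩ hdom
    obtain ⟨f, ⟨s, hsne, hsY, rfl⟩, hev⟩ := hdom g
    have hB : (⋂ f' ∈ s, {n | f' n < g n}) ∈ F :=
      (Filter.biInter_finset_mem s).2 fun f' hf' => hg f' (hsY hf')
    have hsub : (⋂ f' ∈ s, {n | f' n < g n}) ⊆ {n | s.sup (fun f => f n) < g n} := by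
      intro n hn
      simp only [Set.mem_iInter] at hn
      obtain ⟨f0, hf0⟩ := hsne
      have hgpos : (0 : ℕ) < g n := lt_of_le_of_lt (Nat.zero_le _) (hn f0 hf0)
      exact Finset.sup_lt_iff hgpos |>.2 fun f' hf' => hn f' hf'
    have hinf : {n | s.sup (fun f => f n) < g n}.Infinite :=
      infinite_of_mem_nonprincipal hne hnp (Filter.mem_of_superset hB hsub)
    have hfreq : ∃ᶠ n in atTop, s.sup (fun f => f n) < g n :=
      Nat.frequently_atTop_iff_infinite.mpr hinf
    obtain ⟨n, hn1, hn2⟩ := (hfreq.and_eventually hev).exists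
    exact absurd hn2 (not_le.mpr hn1)
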